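/- Let f : ℝ^d → ℝ^d be twice continuously differentiable and let y : ℝ → ℝ^d be differentiable with y'(t) = f(y(t)) for all t. Then for every t₀ ∈ ℝ the one-step (local truncation) error of SSPRK2 is of third order: there exist constants K > 0 and δ > 0 such that ‖Φ₂(h, f, y(t₀)) − y(t₀ + h)‖ ≤ K·h³ for all h ∈ (0, δ]. -/

import Mathlib

/-- One step of the SSPRK2 method with step size `h` for the ODE `y' = f(y)`:
`Φ₂(h,f,y) = (1/2)y + (1/2)y₁ + (1/2)h·f(y₁)` where `y₁ = y + h·f(y)`. -/
noncomputable def ssprk2Step {E : Type*} [AddCommGroup E] [Module ℝ E]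
    (h : ℝ) (f : E → E) (y : E) : E :=
  (1 / 2 : ℝ) • y + (1 / 2 : ℝ) • (y + h • f y) + ((1 / 2 : ℝ) * h) • f (y + h • f y)

set_option maxHeartbeats 1000000 in
/-- If `f : ℝ^d → ℝ^d` is twice continuously differentiable and `y` solves `y' = f(y)`,
then at every time `t₀` the one-step (local truncation) error of SSPRK2 is of third
order: `‖Φ₂(h, f, y(t₀)) − y(t₀ + h)‖ ≤ K·h³` for all sufficiently small `h > 0`. -/
theorem ssprk2_local_truncation_error_third_order
    {d : ℕ} (f : EuclideanSpace ℝ (Fin d) → EuclideanSpace ℝ (Fin d))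
    (hf : ContDiff ℝ 2 f)
    (y : ℝ → EuclideanSpace ℝ (Fin d))
    (hy : ∀ t : ℝ, HasDerivAt y (f (y t)) t) :
    ∀ t₀ : ℝ, ∃ K > (0 : ℝ), ∃ δ > (0 : ℝ), ∀ h ∈ Set.Ioc (0 : ℝ) δ,
      ‖ssprk2Step h f (y t₀) - y (t₀ + h)‖ ≤ K * h ^ 3 := by
  intro t₀
  set y₀ := y t₀ with hy₀def
  set v := f y₀ with hvdef
  -- regularity of y
  have hyd : Differentiable ℝ y := fun t => (hy t).differentiableAt
  have hderiv_y : deriv y = fun t => f (y t) := funext fun t => (hy t).deriv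
  have yC1 : ContDiff ℝ 1 y := by
    rw [contDiff_one_iff_deriv, hderiv_y]
    exact ⟨hyd, hf.continuous.comp hyd.continuous⟩
  have yC2 : ContDiff ℝ 2 y := by
    rw [show (2 : WithTop ℕ∞) = 1 + 1 by norm_num, contDiff_succ_iff_deriv, hderiv_y]
    exact ⟨hyd, by simp, (hf.of_le one_le_two).comp yC1⟩
  have yC3 : ContDiff ℝ 3 y := by
    rw [show (3 : WithTop ℕ∞) = 2 + 1 by norm_num, contDiff_succ_iff_deriv, hderiv_y]
    exact ⟨hyd, by simp, hf.comp yC2⟩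
  -- auxiliary functions
  set φ : ℝ → EuclideanSpace ℝ (Fin d) := fun h => f (y₀ + h • v) with hφdef
  have haff : ContDiff ℝ 2 (fun h : ℝ => y₀ + h • v) :=
    contDiff_const.add (contDiff_id.smul contDiff_const)
  have φC2 : ContDiff ℝ 2 φ := hf.comp haff
  set ψ : ℝ → EuclideanSpace ℝ (Fin d) := fun h => y (t₀ + h) with hψdef
  have ψC3 : ContDiff ℝ 3 ψ := yC3.comp (contDiff_const.add contDiff_id)
  have hψ : ∀ h : ℝ, HasDerivAt ψ (f (ψ h)) h := by
    intro h
    have := (hy (t₀ + h)).scomp h ((hasDerivAt_const h t₀).add (hasDerivAt_id h))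
    simpa [Function.comp_def] using this
  have ψ0 : ψ 0 = y₀ := by simp [hψdef, hy₀def]
  have φ0 : φ 0 = v := by simp [hφdef, hvdef]
  -- derivatives of φ
  set A : ℝ → EuclideanSpace ℝ (Fin d) := deriv φ with hAdef
  have AC1 : ContDiff ℝ 1 A := by
    rw [show (2 : WithTop ℕ∞) = 1 + 1 by norm_num, contDiff_succ_iff_deriv] at φC2
    exact φC2.2.2
  have hA : ∀ h : ℝ, HasDerivAt φ (A h) h := fun h =>
    ((φC2.differentiable two_ne_zero) h).hasDerivAt
  set A' : ℝ → EuclideanSpace ℝ (Fin d) := deriv A with hA'def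
  have AC1' := contDiff_one_iff_deriv.mp AC1
  have hA' : ∀ h : ℝ, HasDerivAt A (A' h) h := fun h => (AC1'.1 h).hasDerivAt
  have contA' : Continuous A' := AC1'.2
  -- second and third derivatives of ψ
  have ψ1eq : deriv ψ = fun h => f (ψ h) := funext fun h => (hψ h).deriv
  have ψ1C2 : ContDiff ℝ 2 (deriv ψ) := by
    rw [show (3 : WithTop ℕ∞) = 2 + 1 by norm_num, contDiff_succ_iff_deriv] at ψC3
    exact ψC3.2.2
  set ψ2 : ℝ → EuclideanSpace ℝ (Fin d) := deriv (deriv ψ) with hψ2def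
  have ψ2C1 : ContDiff ℝ 1 ψ2 := by
    rw [show (2 : WithTop ℕ∞) = 1 + 1 by norm_num, contDiff_succ_iff_deriv] at ψ1C2
    exact ψ1C2.2.2
  have hψ2 : ∀ h : ℝ, HasDerivAt (fun h => f (ψ h)) (ψ2 h) h := by
    intro h
    have h1 : HasDerivAt (deriv ψ) (ψ2 h) h := ((ψ1C2.differentiable two_ne_zero) h).hasDerivAt
    rw [ψ1eq] at h1
    exact h1
  set ψ3 : ℝ → EuclideanSpace ℝ (Fin d) := deriv ψ2 with hψ3def
  have ψ2C1' := contDiff_one_iff_deriv.mp ψ2C1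
  have hψ3 : ∀ h : ℝ, HasDerivAt ψ2 (ψ3 h) h := fun h => (ψ2C1'.1 h).hasDerivAt
  have contψ3 : Continuous ψ3 := ψ2C1'.2
  -- A 0 = ψ2 0
  have hfd : Differentiable ℝ f := hf.differentiable two_ne_zero
  have hAval : A 0 = fderiv ℝ f y₀ v := by
    have hc : HasDerivAt (fun h : ℝ => y₀ + h • v) v 0 := by
      simpa using ((hasDerivAt_id (0 : ℝ)).smul_const v).const_add y₀
    have hfd0 : HasFDerivAt f (fderiv ℝ f y₀) ((fun h : ℝ => y₀ + h • v) 0) := by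
      simpa using (hfd y₀).hasFDerivAt
    exact (hfd0.comp_hasDerivAt 0 hc).deriv
  have hψ2val : ψ2 0 = fderiv ℝ f y₀ v := by
    have hfd0 : HasFDerivAt f (fderiv ℝ f y₀) (ψ 0) := by
      rw [ψ0]; exact (hfd y₀).hasFDerivAt
    have h2 : HasDerivAt (fun h => f (ψ h)) (fderiv ℝ f y₀ (f (ψ 0))) 0 :=
      hfd0.comp_hasDerivAt 0 (hψ 0)
    rw [ψ0, ← hvdef] at h2
    have h3 := h2.deriv
    rw [hψ2def, ψ1eq]
    exact h3
  have A0eq : A 0 = ψ2 0 := by rw [hAval, hψ2val]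
  -- the error function and its derivatives
  set g : ℝ → EuclideanSpace ℝ (Fin d) := fun h =>
    (1 / 2 : ℝ) • y₀ + (1 / 2 : ℝ) • (y₀ + h • v) + ((1 / 2 : ℝ) * h) • φ h - ψ h with hgdef
  set G1 : ℝ → EuclideanSpace ℝ (Fin d) := fun h =>
    0 + (1 / 2 : ℝ) • v + (((1 / 2 : ℝ) * h) • A h + (1 / 2 : ℝ) • φ h) - f (ψ h) with hG1def
  set G2 : ℝ → EuclideanSpace ℝ (Fin d) := fun h =>
    0 + ((((1 / 2 : ℝ) * h) • A' h + (1 / 2 : ℝ) • A h) + (1 / 2 : ℝ) • A h) - ψ2 h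
    with hG2def
  have hhalf : ∀ h : ℝ, HasDerivAt (fun h : ℝ => (1 / 2 : ℝ) * h) (1 / 2 : ℝ) h := by
    intro h
    simpa using (hasDerivAt_id h).const_mul (1 / 2 : ℝ)
  have hg : ∀ h : ℝ, HasDerivAt g (G1 h) h := by
    intro h
    have p1 : HasDerivAt (fun _ : ℝ => (1 / 2 : ℝ) • y₀) (0 : EuclideanSpace ℝ (Fin d)) h :=
      hasDerivAt_const _ _
    have p2 : HasDerivAt (fun h : ℝ => (1 / 2 : ℝ) • (y₀ + h • v)) ((1 / 2 : ℝ) • v) h := by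
      have := (((hasDerivAt_id h).smul_const v).const_add y₀).const_smul (1 / 2 : ℝ)
      rw [one_smul] at this
      exact this
    have p3 : HasDerivAt (fun h : ℝ => ((1 / 2 : ℝ) * h) • φ h)
        (((1 / 2 : ℝ) * h) • A h + (1 / 2 : ℝ) • φ h) h := (hhalf h).smul (hA h)
    exact ((p1.add p2).add p3).sub (hψ h)
  have hG1 : ∀ h : ℝ, HasDerivAt G1 (G2 h) h := by
    intro h
    have q1 : HasDerivAt (fun _ : ℝ => (0 : EuclideanSpace ℝ (Fin d)) + (1 / 2 : ℝ) • v)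
        (0 : EuclideanSpace ℝ (Fin d)) h := hasDerivAt_const _ _
    have q2 : HasDerivAt (fun h : ℝ => ((1 / 2 : ℝ) * h) • A h)
        (((1 / 2 : ℝ) * h) • A' h + (1 / 2 : ℝ) • A h) h := (hhalf h).smul (hA' h)
    have q3 : HasDerivAt (fun h : ℝ => (1 / 2 : ℝ) • φ h) ((1 / 2 : ℝ) • A h) h :=
      (hA h).const_smul (1 / 2 : ℝ)
    exact (q1.add (q2.add q3)).sub (hψ2 h)
  have g0 : g 0 = 0 := by
    simp only [hgdef, zero_smul, add_zero, mul_zero, ψ0]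
    module
  have G10 : G1 0 = 0 := by
    simp only [hG1def, mul_zero, zero_smul, zero_add, φ0, ψ0, ← hvdef]
    module
  have hG2eq : ∀ h : ℝ, G2 h = (A h - A 0) + ((1 / 2 : ℝ) * h) • A' h - (ψ2 h - ψ2 0) := by
    intro h
    simp only [hG2def]
    rw [A0eq]
    module
  -- bounds on [0,1]
  obtain ⟨CA, hCA⟩ := isCompact_Icc.exists_bound_of_continuousOn
    (s := Set.Icc (0 : ℝ) 1) contA'.continuousOn
  obtain ⟨CB, hCB⟩ := isCompact_Icc.exists_bound_of_continuousOn
    (s := Set.Icc (0 : ℝ) 1) contψ3.continuousOn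
  have hCA0 : 0 ≤ CA := le_trans (norm_nonneg _) (hCA 0 (by norm_num))
  have hCB0 : 0 ≤ CB := le_trans (norm_nonneg _) (hCB 0 (by norm_num))
  set C : ℝ := CA + CA / 2 + CB with hCdef
  have hC0 : 0 ≤ C := by positivity
  have hAconv : ∀ x ∈ Set.Icc (0 : ℝ) 1, ‖A x - A 0‖ ≤ CA * x := by
    intro x hx
    have := Convex.norm_image_sub_le_of_norm_hasDerivWithin_le
      (f := A) (f' := A') (s := Set.Icc (0 : ℝ) 1)
      (fun z _ => (hA' z).hasDerivWithinAt) hCA (convex_Icc 0 1)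
      (Set.left_mem_Icc.mpr zero_le_one) hx
    simpa [Real.norm_eq_abs, abs_of_nonneg hx.1] using this
  have hψ2conv : ∀ x ∈ Set.Icc (0 : ℝ) 1, ‖ψ2 x - ψ2 0‖ ≤ CB * x := by
    intro x hx
    have := Convex.norm_image_sub_le_of_norm_hasDerivWithin_le
      (f := ψ2) (f' := ψ3) (s := Set.Icc (0 : ℝ) 1)
      (fun z _ => (hψ3 z).hasDerivWithinAt) hCB (convex_Icc 0 1)
      (Set.left_mem_Icc.mpr zero_le_one) hx
    simpa [Real.norm_eq_abs, abs_of_nonneg hx.1] using this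
  have hG2bound : ∀ x ∈ Set.Ico (0 : ℝ) 1, ‖G2 x‖ ≤ C * x := by
    intro x hx
    have hx' : x ∈ Set.Icc (0 : ℝ) 1 := ⟨hx.1, le_of_lt hx.2⟩
    rw [hG2eq x]
    have h1 : ‖((1 / 2 : ℝ) * x) • A' x‖ ≤ CA / 2 * x := by
      rw [norm_smul, Real.norm_eq_abs, abs_of_nonneg (by linarith [hx.1] : (0:ℝ) ≤ 1/2 * x)]
      calc (1 / 2 * x) * ‖A' x‖ ≤ (1 / 2 * x) * CA :=
            mul_le_mul_of_nonneg_left (hCA x hx') (by linarith [hx.1])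
        _ = CA / 2 * x := by ring
    calc ‖(A x - A 0) + ((1 / 2 : ℝ) * x) • A' x - (ψ2 x - ψ2 0)‖
        ≤ ‖(A x - A 0) + ((1 / 2 : ℝ) * x) • A' x‖ + ‖ψ2 x - ψ2 0‖ := norm_sub_le _ _
      _ ≤ (‖A x - A 0‖ + ‖((1 / 2 : ℝ) * x) • A' x‖) + ‖ψ2 x - ψ2 0‖ :=
          add_le_add_left (norm_add_le _ _) _
      _ ≤ (CA * x + CA / 2 * x) + CB * x :=
          add_le_add (add_le_add (hAconv x hx') h1) (hψ2conv x hx')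
      _ = C * x := by rw [hCdef]; ring
  -- first integration: bound on G1
  have hG1cont : ContinuousOn G1 (Set.Icc (0 : ℝ) 1) :=
    (Differentiable.continuous (fun x => (hG1 x).differentiableAt)).continuousOn
  have hBd1 : ∀ x : ℝ, HasDerivAt (fun x : ℝ => C / 2 * x ^ 2) (C * x) x := by
    intro x
    have := (hasDerivAt_pow 2 x).const_mul (C / 2)
    refine this.congr_deriv ?_
    push_cast
    ring
  have hG1bound : ∀ x ∈ Set.Icc (0 : ℝ) 1, ‖G1 x‖ ≤ C / 2 * x ^ 2 := by
    intro x hx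
    refine image_norm_le_of_norm_deriv_right_le_deriv_boundary hG1cont
      (fun z _ => (hG1 z).hasDerivWithinAt) ?_ hBd1 hG2bound hx
    rw [G10]; simp
  -- second integration: bound on g
  have hgcont : ContinuousOn g (Set.Icc (0 : ℝ) 1) :=
    (Differentiable.continuous (fun x => (hg x).differentiableAt)).continuousOn
  have hBd2 : ∀ x : ℝ, HasDerivAt (fun x : ℝ => C / 6 * x ^ 3) (C / 2 * x ^ 2) x := by
    intro x
    have := (hasDerivAt_pow 3 x).const_mul (C / 6)
    refine this.congr_deriv ?_
    push_cast
    ring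
  have hgbound : ∀ x ∈ Set.Icc (0 : ℝ) 1, ‖g x‖ ≤ C / 6 * x ^ 3 := by
    intro x hx
    refine image_norm_le_of_norm_deriv_right_le_deriv_boundary hgcont
      (fun z _ => (hg z).hasDerivWithinAt) ?_ hBd2
      (fun z hz => hG1bound z ⟨hz.1, le_of_lt hz.2⟩) hx
    rw [g0]; simp
  -- conclusion
  refine ⟨C + 1, by linarith, 1, one_pos, ?_⟩
  intro h hh
  have hmem : h ∈ Set.Icc (0 : ℝ) 1 := ⟨le_of_lt hh.1, hh.2⟩
  have heq : ssprk2Step h f (y t₀) - y (t₀ + h) = g h := by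
    simp only [hgdef, ssprk2Step, hψdef, hvdef, hy₀def, hφdef]
  rw [heq]
  calc ‖g h‖ ≤ C / 6 * h ^ 3 := hgbound h hmem
    _ ≤ (C + 1) * h ^ 3 := by
        have h3 : (0:ℝ) ≤ h ^ 3 := pow_nonneg (le_of_lt hh.1) 3
        nlinarith
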